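/- For all natural numbers k and n and every complex number x, the k-th derivative of the function z ↦ (sinh z)^n, evaluated at x, equals ((-1)^n / 2^n) · Σ_{r=0}^{n} (-1)^r · C(n,r) · (2r − n)^k · exp((2r − n)·x), where C(n,r) is the binomial coefficient. -/

import Mathlib

open Complex Finset

lemma aux_iteratedDeriv_expsum (m : ℕ) (a : ℕ → ℂ) :
    ∀ (k : ℕ) (c : ℕ → ℂ) (f : ℂ → ℂ),
      (∀ z, f z = ∑ r ∈ Finset.range m, c r * Complex.exp (a r * z)) →
      ∀ x, iteratedDeriv k f x =
        ∑ r ∈ Finset.range m, c r * (a r) ^ k * Complex.exp (a r * x) := by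
  intro k
  induction k with
  | zero => intro c f hf x; simp [hf x]
  | succ k ih =>
    intro c f hf x
    rw [iteratedDeriv_succ']
    have hderiv : ∀ z, deriv f z =
        ∑ r ∈ Finset.range m, (c r * a r) * Complex.exp (a r * z) := by
      intro z
      have hfe : f = fun z => ∑ r ∈ Finset.range m, c r * Complex.exp (a r * z) :=
        funext hf
      rw [hfe]
      have h : HasDerivAt (fun z => ∑ r ∈ Finset.range m, c r * Complex.exp (a r * z))
          (∑ r ∈ Finset.range m, (c r * a r) * Complex.exp (a r * z)) z := by
        apply HasDerivAt.fun_sum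
        intro r _
        have := (((hasDerivAt_id z).const_mul (a r)).cexp).const_mul (c r)
        simpa [mul_comm, mul_assoc, mul_left_comm] using this
      exact h.deriv
    have := ih (fun r => c r * a r) (deriv f) hderiv x
    rw [this]
    apply Finset.sum_congr rfl
    intro r _
    ring

lemma sinh_pow_eq (n : ℕ) (z : ℂ) :
    Complex.sinh z ^ n = ∑ r ∈ Finset.range (n + 1),
      (((-1 : ℂ) ^ n / 2 ^ n) * ((-1 : ℂ) ^ r * (n.choose r : ℂ))) *
        Complex.exp ((2 * (r : ℂ) - (n : ℂ)) * z) := by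
  have hs : Complex.sinh z = (Complex.exp z - Complex.exp (-z)) / 2 := by
    rw [← Complex.two_sinh]; ring
  rw [hs, div_pow, sub_pow, Finset.sum_div]
  apply Finset.sum_congr rfl
  intro r hr
  rw [Finset.mem_range] at hr
  have hr' : r ≤ n := Nat.lt_succ_iff.mp hr
  rw [← Complex.exp_nat_mul, ← Complex.exp_nat_mul]
  have hmul : Complex.exp ((r : ℂ) * z) * Complex.exp ((↑(n - r) : ℂ) * -z) =
      Complex.exp ((2 * (r : ℂ) - (n : ℂ)) * z) := by
    rw [← Complex.exp_add]
    congr 1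
    push_cast [hr']
    ring
  have hsign : ((-1 : ℂ)) ^ (r + n) = (-1 : ℂ) ^ n * (-1 : ℂ) ^ r := by
    rw [pow_add]; ring
  rw [mul_assoc ((-1 : ℂ) ^ (r + n)), hmul, hsign]
  field_simp

theorem iteratedDeriv_sinh_pow (k n : ℕ) (x : ℂ) :
    iteratedDeriv k (fun z : ℂ => Complex.sinh z ^ n) x =
      ((-1 : ℂ) ^ n / 2 ^ n) *
        ∑ r ∈ Finset.range (n + 1),
          (-1 : ℂ) ^ r * (n.choose r : ℂ) * (2 * (r : ℂ) - (n : ℂ)) ^ k *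
            Complex.exp ((2 * (r : ℂ) - (n : ℂ)) * x) := by
  rw [aux_iteratedDeriv_expsum (n + 1)
      (fun r => 2 * (r : ℂ) - (n : ℂ)) k
      (fun r => ((-1 : ℂ) ^ n / 2 ^ n) * ((-1 : ℂ) ^ r * (n.choose r : ℂ))) _ (fun z => sinh_pow_eq n z) x]
  rw [Finset.mul_sum]
  apply Finset.sum_congr rfl
  intro r _
  ring
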